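/- Let G be a group acting on a set X, and let L^∞(X,ℤ) denote bounded integer-valued functions on X with the induced G-action. For every ℤG-module M there is a natural isomorphism (L^∞(X,ℤ) ⋊ G) ⊗_{ℤG} M ≅ L^∞(X,ℤ) ⊗_ℤ M of abelian groups. Consequently, since L^∞(X,ℤ) is torsion-free as an abelian group, the crossed product ring L^∞(X,ℤ) ⋊ G is flat as a right ℤG-module. -/

import Mathlib

open scoped TensorProduct

/-- The abelian group `L^∞(X,ℤ)` of bounded integer-valued functions on `X`. -/
def boundedZ (X : Type*) : AddSubgroup (X → ℤ) where
  carrier := {f | ∃ N : ℤ, ∀ x, |f x| ≤ N}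
  add_mem' := by
    rintro f g ⟨N, hN⟩ ⟨M, hM⟩
    exact ⟨N + M, fun x => (abs_add_le _ _).trans (add_le_add (hN x) (hM x))⟩
  zero_mem' := ⟨0, by simp⟩
  neg_mem' := by
    rintro f ⟨N, hN⟩
    exact ⟨N, fun x => by simpa using hN x⟩

/-- The crossed product `L^∞(X,ℤ) ⋊ G`, i.e. the free `L^∞(X,ℤ)`-module on `G`.  Its right
`ℤG`-module structure is given by right translation of the `G`-coordinate. -/
def CrossedProd (X G : Type*) : Type _ := G →₀ (boundedZ X)

noncomputable instance (X G : Type*) : AddCommGroup (CrossedProd X G) :=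
  inferInstanceAs (AddCommGroup (G →₀ (boundedZ X)))

/-- Right multiplication by `g ∈ G ⊆ ℤG` on the crossed product `L^∞(X,ℤ) ⋊ G`:
`(r·h)·g = r·(hg)`. -/
noncomputable def rTrans {X G : Type*} [Group G] (g : G) (s : CrossedProd X G) :
    CrossedProd X G :=
  Finsupp.mapDomain (fun h => h * g) s

/-- The subgroup of relations defining the balanced tensor product
`(L^∞(X,ℤ) ⋊ G) ⊗_{ℤG} M` as a quotient of `(L^∞(X,ℤ) ⋊ G) ⊗_ℤ M`. -/
noncomputable def crossedRel (X : Type*) (G : Type*) [Group G] (M : Type*)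
    [AddCommGroup M] [DistribMulAction G M] :
    Submodule ℤ (CrossedProd X G ⊗[ℤ] M) :=
  Submodule.span ℤ
    {x | ∃ (s : CrossedProd X G) (g : G) (m : M), x = rTrans g s ⊗ₜ[ℤ] m - s ⊗ₜ[ℤ] (g • m)}

/-- The balanced tensor product `(L^∞(X,ℤ) ⋊ G) ⊗_{ℤG} M`. -/
noncomputable def crossedTensor (X : Type*) (G : Type*) [Group G] (M : Type*)
    [AddCommGroup M] [DistribMulAction G M] : Type _ :=
  (CrossedProd X G ⊗[ℤ] M) ⧸ crossedRel X G M

noncomputable instance (X : Type*) (G : Type*) [Group G] (M : Type*) [AddCommGroup M]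
    [DistribMulAction G M] : AddCommGroup (crossedTensor X G M) :=
  inferInstanceAs (AddCommGroup ((CrossedProd X G ⊗[ℤ] M) ⧸ crossedRel X G M))

----------------- AUX -----------------
section Aux

variable (X : Type*) (G : Type*) [Group G] (M : Type*) [AddCommGroup M] [DistribMulAction G M]

/-- the action of `g` as a `ℤ`-linear map. -/
noncomputable def actL (g : G) : M →ₗ[ℤ] M :=
  (DistribMulAction.toAddMonoidHom M g).toIntLinearMap

@[simp] lemma actL_apply (g : G) (m : M) : actL G M g m = g • m := rfl

/-- the forward map on the un-quotiented tensor product. -/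
noncomputable def crossedToTensor :
    (CrossedProd X G) ⊗[ℤ] M →ₗ[ℤ] (boundedZ X) ⊗[ℤ] M :=
  TensorProduct.lift
    ((Finsupp.lsum ℤ (fun g => (TensorProduct.mk ℤ (boundedZ X) M).compl₂ (actL G M g)) :
      (G →₀ (boundedZ X)) →ₗ[ℤ] M →ₗ[ℤ] (boundedZ X) ⊗[ℤ] M))

lemma crossedToTensor_tmul (s : G →₀ (boundedZ X)) (m : M) :
    crossedToTensor X G M ((s : CrossedProd X G) ⊗ₜ[ℤ] m) =
      s.sum (fun g a => a ⊗ₜ[ℤ] (g • m)) := by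
  show TensorProduct.lift _ (s ⊗ₜ[ℤ] m) = _
  rw [TensorProduct.lift.tmul]
  erw [Finsupp.lsum_apply]
  simp only [Finsupp.sum, LinearMap.coe_sum, Finset.sum_apply, LinearMap.compl₂_apply,
    TensorProduct.mk_apply, actL_apply]
  rfl

lemma crossedToTensor_rel :
    crossedRel X G M ≤ LinearMap.ker (crossedToTensor X G M) := by
  rw [crossedRel, Submodule.span_le]
  rintro _ ⟨s, g, m, rfl⟩
  simp only [SetLike.mem_coe, LinearMap.mem_ker, map_sub, crossedToTensor_tmul]
  rw [sub_eq_zero, rTrans]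
  change crossedToTensor X G M ((Finsupp.mapDomain (fun h => h * g) (s : G →₀ boundedZ X) : CrossedProd X G) ⊗ₜ[ℤ] m) = crossedToTensor X G M ((s : G →₀ boundedZ X) ⊗ₜ[ℤ] (g • m))
  refine (crossedToTensor_tmul X G M (Finsupp.mapDomain (fun h => h * g) (s : G →₀ boundedZ X)) m).trans ((?_ : _ = _).trans (crossedToTensor_tmul X G M (s : G →₀ boundedZ X) (g • m)).symm)
  refine (Finsupp.sum_mapDomain_index (by simp) (by intros; rw [TensorProduct.add_tmul])).trans ?_
  simp [mul_smul]

noncomputable def toQ : crossedTensor X G M →ₗ[ℤ] (boundedZ X) ⊗[ℤ] M :=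
  Submodule.liftQ _ (crossedToTensor X G M) (crossedToTensor_rel X G M)

lemma toQ_mk (z : CrossedProd X G ⊗[ℤ] M) :
    toQ X G M (Submodule.Quotient.mk z) = crossedToTensor X G M z := rfl

noncomputable def fromT : (boundedZ X) ⊗[ℤ] M →ₗ[ℤ] crossedTensor X G M :=
  TensorProduct.lift
    (((TensorProduct.mk ℤ (CrossedProd X G) M).comp
        (Finsupp.lsingle (1 : G) : (boundedZ X) →ₗ[ℤ] (G →₀ (boundedZ X)))).compr₂
      (crossedRel X G M).mkQ)

lemma fromT_tmul (a : boundedZ X) (m : M) :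
    fromT X G M (a ⊗ₜ[ℤ] m) =
      Submodule.Quotient.mk ((Finsupp.single (1 : G) a : CrossedProd X G) ⊗ₜ[ℤ] m) := by
  rfl

lemma rel_mk (g : G) (s : CrossedProd X G) (m : M) :
    (Submodule.Quotient.mk (rTrans g s ⊗ₜ[ℤ] m) : crossedTensor X G M) =
      Submodule.Quotient.mk (s ⊗ₜ[ℤ] (g • m)) := by
  rw [Submodule.Quotient.eq]
  exact Submodule.subset_span ⟨s, g, m, rfl⟩

lemma fromT_toQ (s : G →₀ (boundedZ X)) (m : M) :
    fromT X G M (crossedToTensor X G M ((s : CrossedProd X G) ⊗ₜ[ℤ] m)) =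
      Submodule.Quotient.mk ((s : CrossedProd X G) ⊗ₜ[ℤ] m) := by
  rw [crossedToTensor_tmul, map_finsuppSum]
  set L : CrossedProd X G →ₗ[ℤ] crossedTensor X G M :=
    (crossedRel X G M).mkQ.comp ((TensorProduct.mk ℤ (CrossedProd X G) M).flip m) with hL
  show ∑ g ∈ s.support, fromT X G M ((s g : boundedZ X) ⊗ₜ[ℤ] (g • m)) = _
  calc ∑ g ∈ s.support, fromT X G M ((s g : boundedZ X) ⊗ₜ[ℤ] (g • m))
      = ∑ g ∈ s.support, L (Finsupp.single g (s g) : CrossedProd X G) := by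
        refine Finset.sum_congr rfl (fun g _ => ?_)
        rw [fromT_tmul]; refine (rel_mk X G M g (Finsupp.single (1:G) (s g)) m).symm.trans ?_
        show (Submodule.Quotient.mk ((Finsupp.mapDomain (fun h => h * g)
          (Finsupp.single (1:G) (s g)) : CrossedProd X G) ⊗ₜ[ℤ] m) : crossedTensor X G M) = _
        rw [Finsupp.mapDomain_single, one_mul]
        rfl
    _ = L (∑ g ∈ s.support, (Finsupp.single g (s g) : CrossedProd X G)) := (map_sum L _ _).symm
    _ = L (s.sum (fun g a => (Finsupp.single g a : CrossedProd X G))) := rfl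
    _ = L (s : CrossedProd X G) := by congr 1; exact Finsupp.sum_single s
    _ = _ := rfl

noncomputable def crossedEquiv : crossedTensor X G M ≃ₗ[ℤ] (boundedZ X) ⊗[ℤ] M := by
  refine LinearEquiv.ofLinear (toQ X G M) (fromT X G M) ?_ ?_
  · apply TensorProduct.ext'
    intro a m
    erw [LinearMap.comp_apply, fromT_tmul, toQ_mk, crossedToTensor_tmul]
    rw [Finsupp.sum_single_index (by simp)]
    simp
    rfl
  · apply Submodule.linearMap_qext
    apply TensorProduct.ext'
    intro s m
    exact fromT_toQ X G M s m

lemma crossedEquiv_mk (s : G →₀ (boundedZ X)) (m : M) :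
    crossedEquiv X G M (Submodule.Quotient.mk ((s : CrossedProd X G) ⊗ₜ[ℤ] m)) =
      s.sum (fun g a => a ⊗ₜ[ℤ] (g • m)) := by
  show toQ X G M _ = _
  rw [toQ_mk, crossedToTensor_tmul]

end Aux

-- flat

theorem flat_of_torsionfree (A : Type*) [AddCommGroup A] [NoZeroSMulDivisors ℤ A] :
    Module.Flat ℤ A := by
  rw [Module.Flat.iff_rTensor_injective']
  intro I
  obtain ⟨n, hn⟩ : I.IsPrincipal := inferInstance
  by_cases hn0 : n = 0
  · subst hn0
    have hI : I = ⊥ := by simp [hn]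
    intro z w h
    have hz : ∀ u : I ⊗[ℤ] A, u = 0 := by
      intro u
      induction u using TensorProduct.induction_on with
      | zero => rfl
      | tmul x a =>
          have hx : (x : ℤ) ∈ (⊥ : Ideal ℤ) := hI ▸ x.2
          have : x = 0 := Subtype.ext (by simpa using hx)
          rw [this, TensorProduct.zero_tmul]
      | add u v hu hv => rw [hu, hv, add_zero]
    rw [hz z, hz w]
  · have hn' : I = Submodule.span ℤ {n} := hn
    subst hn'
    set e := LinearEquiv.toSpanNonzeroSingleton ℤ ℤ n hn0
    have key : (LinearMap.rTensor A (Submodule.span ℤ {n}).subtype) ∘ₗ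
        (TensorProduct.congr e (LinearEquiv.refl ℤ A)).toLinearMap
        = n • (LinearMap.id : ℤ ⊗[ℤ] A →ₗ[ℤ] ℤ ⊗[ℤ] A) := by
      apply TensorProduct.ext'
      intro x a
      simp [e, TensorProduct.congr_tmul, LinearEquiv.toSpanNonzeroSingleton,
        LinearMap.toSpanSingleton_apply, TensorProduct.smul_tmul', smul_eq_mul, mul_comm]
      show (n * x) ⊗ₜ[ℤ] a = n • (x ⊗ₜ[ℤ] a)
      rw [TensorProduct.smul_tmul', smul_eq_mul]
    have hnz : NoZeroSMulDivisors ℤ (ℤ ⊗[ℤ] A) :=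
      Function.Injective.noZeroSMulDivisors (TensorProduct.lid ℤ A)
        (TensorProduct.lid ℤ A).injective (map_zero _) (map_smul _)
    intro z w h
    obtain ⟨z', rfl⟩ := (TensorProduct.congr e (LinearEquiv.refl ℤ A)).surjective z
    obtain ⟨w', rfl⟩ := (TensorProduct.congr e (LinearEquiv.refl ℤ A)).surjective w
    have hz := congrFun (congrArg (fun f => f.toFun) key) z'
    have hw := congrFun (congrArg (fun f => f.toFun) key) w'
    have : (n • z' : ℤ ⊗[ℤ] A) = n • w' := by
      rw [← LinearMap.id_apply (R := ℤ) z', ← LinearMap.id_apply (R := ℤ) w',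
        ← LinearMap.smul_apply, ← LinearMap.smul_apply, ← key]
      exact h
    congr 1
    exact smul_right_injective _ hn0 this

instance noZeroSMul_boundedZ (X : Type*) : NoZeroSMulDivisors ℤ (boundedZ X) := by
  constructor
  intro n f h
  by_cases hn : n = 0
  · exact Or.inl hn
  · refine Or.inr (Subtype.ext (funext fun x => ?_))
    have h1 : ((n • f : boundedZ X) : X → ℤ) x = 0 := by rw [h]; rfl
    have h2 : n • ((f : X → ℤ) x) = 0 := by
      simpa using h1
    rcases smul_eq_zero.mp h2 with h3 | h3
    · exact absurd h3 hn
    · simpa using h3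



set_option synthInstance.maxHeartbeats 1000000 in
/-- For a group `G` acting on a set `X` and any `ℤG`-module `M` there is an
isomorphism of abelian groups `(L^∞(X,ℤ) ⋊ G) ⊗_{ℤG} M ≅ L^∞(X,ℤ) ⊗_ℤ M`; consequently the
crossed product `L^∞(X,ℤ) ⋊ G` is flat as a right `ℤG`-module: for every injective
`G`-equivariant map `φ : M → N` of `ℤG`-modules, the induced map
`(L^∞(X,ℤ) ⋊ G) ⊗_{ℤG} M → (L^∞(X,ℤ) ⋊ G) ⊗_{ℤG} N` is injective. -/
theorem stmt_4 (X : Type*) (G : Type*) [Group G] [MulAction G X] :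
    (∀ (M : Type) [AddCommGroup M] [DistribMulAction G M],
      Nonempty (crossedTensor X G M ≃+ ((boundedZ X) ⊗[ℤ] M))) ∧
    (∀ (M N : Type) [AddCommGroup M] [DistribMulAction G M]
      [AddCommGroup N] [DistribMulAction G N]
      (φ : M →+ N), (∀ (g : G) (m : M), φ (g • m) = g • φ m) → Function.Injective φ →
      ∀ (F : crossedTensor X G M →+ crossedTensor X G N),
        (∀ (s : CrossedProd X G) (m : M),
          F (Submodule.Quotient.mk (s ⊗ₜ[ℤ] m)) = Submodule.Quotient.mk (s ⊗ₜ[ℤ] φ m)) →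
        Function.Injective F) := by
  constructor
  · intro M _ _
    exact ⟨(crossedEquiv X G M).toAddEquiv⟩
  · intro M N _ _ _ _ φ hφ hinj F hF
    haveI : Module.Flat ℤ (boundedZ X) := flat_of_torsionfree _
    set φL : M →ₗ[ℤ] N := φ.toIntLinearMap with hφL
    have hLT : Function.Injective (LinearMap.lTensor (boundedZ X) φL) :=
      Module.Flat.lTensor_preserves_injective_linearMap φL hinj
    have key : ∀ z : CrossedProd X G ⊗[ℤ] M,
        crossedEquiv X G N (F (Submodule.Quotient.mk z)) =
          LinearMap.lTensor (boundedZ X) φL (crossedEquiv X G M (Submodule.Quotient.mk z)) := by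
      intro z
      induction z using TensorProduct.induction_on with
      | zero => simp only [Submodule.Quotient.mk_zero, map_zero]; erw [map_zero F, map_zero (crossedEquiv X G N)]
      | tmul s m =>
          rw [hF s m, crossedEquiv_mk X G N s (φ m), crossedEquiv_mk X G M s m,
            map_finsuppSum (LinearMap.lTensor (boundedZ X) φL) (f := (s : G →₀ boundedZ X))]
          refine Finset.sum_congr rfl (fun g _ => ?_)
          simp only [LinearMap.lTensor_tmul, hφL, AddMonoidHom.coe_toIntLinearMap, hφ]
      | add z w hz hw =>
          rw [Submodule.Quotient.mk_add]; erw [map_add F]; rw [map_add, hz, hw]; erw [map_add (crossedEquiv X G M)]; rw [map_add]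
    intro x y hxy
    obtain ⟨zx, rfl⟩ := Submodule.Quotient.mk_surjective _ x
    obtain ⟨zy, rfl⟩ := Submodule.Quotient.mk_surjective _ y
    have h1 := (key zx).symm.trans ((congrArg (crossedEquiv X G N) hxy).trans (key zy))
    have h2 := hLT h1
    exact (crossedEquiv X G M).injective h2
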